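/- For the Grim Reaper curve γ(s) = -log(cos s) - i·s with s ∈ (-π/2, π/2), the curvature vector of γ equals the projection of the constant vector T = -1 ∈ ℂ onto the normal direction of γ, with opposite sign; that is, γ is a translating soliton of curve shortening flow with velocity T = -1: k + ⟨T, N⟩ = 0, where k is the signed curvature and N the unit normal. -/

import Mathlib

/-- The Grim Reaper curve `γ(s) = -log(cos s) - i·s`. -/
noncomputable def grimReaperCurve (s : ℝ) : ℂ :=
  -(Real.log (Real.cos s) : ℂ) - Complex.I * (s : ℂ)

/-- Signed curvature of a plane curve: `k = det(γ', γ'')/|γ'|³`. -/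
noncomputable def grimCurvature (s : ℝ) : ℝ :=
  ((deriv grimReaperCurve s).re * (deriv (deriv grimReaperCurve) s).im -
      (deriv grimReaperCurve s).im * (deriv (deriv grimReaperCurve) s).re) /
    ‖deriv grimReaperCurve s‖ ^ 3

/-- The unit normal `N = i·γ'/|γ'|`. -/
noncomputable def grimNormal (s : ℝ) : ℂ :=
  Complex.I * deriv grimReaperCurve s / (‖deriv grimReaperCurve s‖ : ℂ)

lemma hasDerivAt_grim (s : ℝ) (hs : Real.cos s ≠ 0) :
    HasDerivAt grimReaperCurve ((Real.tan s : ℂ) - Complex.I) s := by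
  have h1 : HasDerivAt (fun t : ℝ => Real.log (Real.cos t)) (-Real.sin s / Real.cos s) s :=
    (Real.hasDerivAt_cos s).log hs
  have h2 := h1.ofReal_comp
  have h3 : HasDerivAt (fun t : ℝ => Complex.I * (t : ℂ)) Complex.I s := by
    simpa using (Complex.ofRealCLM.hasDerivAt (x := s)).const_mul Complex.I
  have := h2.neg.sub h3
  convert this using 1
  · rfl
  · rfl
  rw [Real.tan_eq_sin_div_cos]
  push_cast [neg_div]
  ring

lemma deriv_grim (s : ℝ) (hs : Real.cos s ≠ 0) :
    deriv grimReaperCurve s = (Real.tan s : ℂ) - Complex.I :=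
  (hasDerivAt_grim s hs).deriv

lemma deriv2_grim (s : ℝ) (hc : 0 < Real.cos s) :
    deriv (deriv grimReaperCurve) s = ((1 / Real.cos s ^ 2 : ℝ) : ℂ) := by
  have hev : ∀ᶠ t in nhds s, 0 < Real.cos t :=
    Real.continuous_cos.continuousAt.eventually (eventually_gt_nhds hc)
  have hev2 : deriv grimReaperCurve =ᶠ[nhds s] fun t => (Real.tan t : ℂ) - Complex.I :=
    hev.mono fun t ht => deriv_grim t ht.ne'
  rw [hev2.deriv_eq]
  have h : HasDerivAt (fun t : ℝ => (Real.tan t : ℂ) - Complex.I)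
      ((1 / Real.cos s ^ 2 : ℝ) : ℂ) s :=
    (Real.hasDerivAt_tan hc.ne').ofReal_comp.sub_const _
  exact h.deriv

theorem grimReaper_is_translator :
    ∀ s ∈ Set.Ioo (-(Real.pi / 2)) (Real.pi / 2),
      grimCurvature s + (((-1 : ℂ)) * (starRingEnd ℂ) (grimNormal s)).re = 0 := by
  intro s hs
  have hc : 0 < Real.cos s := Real.cos_pos_of_mem_Ioo hs
  have hd1 := deriv_grim s hc.ne'
  have hd2 := deriv2_grim s hc
  have hnorm : ‖((Real.tan s : ℂ) - Complex.I)‖ = 1 / Real.cos s := by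
    rw [Complex.norm_def, Complex.normSq_apply]
    simp only [Complex.sub_re, Complex.ofReal_re, Complex.I_re, Complex.sub_im,
      Complex.ofReal_im, Complex.I_im, sub_zero, zero_sub]
    have : Real.tan s * Real.tan s + -1 * -1 = 1 / Real.cos s ^ 2 := by
      rw [Real.tan_eq_sin_div_cos]
      field_simp
      nlinarith [Real.sin_sq_add_cos_sq s]
    rw [this]
    rw [one_div, Real.sqrt_inv, Real.sqrt_sq hc.le, one_div]
  unfold grimCurvature grimNormal
  rw [hd1, hd2, hnorm]
  have h1 : ((Real.tan s : ℂ) - Complex.I).re = Real.tan s := by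
    simp only [Complex.sub_re, Complex.ofReal_re, Complex.I_re, sub_zero]
  have h2 : ((Real.tan s : ℂ) - Complex.I).im = -1 := by
    simp only [Complex.sub_im, Complex.ofReal_im, Complex.I_im, zero_sub]
  have h3 : (((1 / Real.cos s ^ 2 : ℝ) : ℂ)).re = 1 / Real.cos s ^ 2 := Complex.ofReal_re _
  have h4 : (((1 / Real.cos s ^ 2 : ℝ) : ℂ)).im = 0 := Complex.ofReal_im _
  rw [h1, h2, h3, h4]
  have hre : ((-1 : ℂ) * (starRingEnd ℂ)
      (Complex.I * ((Real.tan s : ℂ) - Complex.I) / ((1 / Real.cos s : ℝ) : ℂ))).re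
      = -Real.cos s := by
    rw [div_eq_mul_inv, ← Complex.ofReal_inv, one_div, inv_inv, neg_one_mul,
      Complex.neg_re, Complex.conj_re]
    simp only [Complex.mul_re, Complex.mul_im, Complex.I_re, Complex.I_im,
      Complex.ofReal_re, Complex.ofReal_im, Complex.sub_re, Complex.sub_im]
    ring
  rw [hre]
  field_simp
  ring
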